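/- For every real C ≥ 1 there exists a real C′ ≥ 1, depending only on C, with the following property. Let k ≥ C′ be an integer and let t_0 < t_1 < … < t_k be real numbers such that for all 1 ≤ j ≤ k, (t_k − t_0)/(C·min(j, k+1−j)²) ≤ t_j − t_{j−1} ≤ C·(t_k − t_0)/min(j, k+1−j)². Let h : ℝ → ℝ be a monotone nondecreasing function with h(t_j) = j for all 0 ≤ j ≤ k. Then there exist a real number t and δ > 0 with t − δ ≥ t_0 and t + δ ≤ t_k such that h(t + δ) − h(t) ≥ (k/C′)·(h(t) − h(t − δ)) and h(t + δ) − h(t) ≥ k/C′. In particular the quasisymmetric distortion sup over x, δ of (h(x+δ) − h(x))/(h(x) − h(x−δ)) is at least k/C′ whenever the denominator is positive at the witness. -/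

import Mathlib

/-- Abstract core of Proposition 3.11: if points `t_0 < t_1 < … < t_k` satisfy the Yoccoz
almost-parabolic distribution `t_j - t_{j-1} ≍_C (t_k - t_0)/min(j, k+1-j)²` and a monotone
map `h` sends `t_j` to `j`, then there are `x` and `δ > 0` with `[x - δ, x + δ] ⊆ [t_0, t_k]`
such that `h(x+δ) - h(x) ≥ (k/C')·(h(x) - h(x-δ))` and `h(x+δ) - h(x) ≥ k/C'`, for a constant
`C'` depending only on `C`. -/
theorem quasisymmetric_distortion_lower_bound (C : ℝ) (hC : 1 ≤ C) :
    ∃ C' : ℝ, 1 ≤ C' ∧ ∀ k : ℕ, C' ≤ (k : ℝ) → ∀ t : ℕ → ℝ,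
      (∀ i j : ℕ, i < j → j ≤ k → t i < t j) →
      (∀ j : ℕ, 1 ≤ j → j ≤ k →
        (t k - t 0) / (C * ((min j (k + 1 - j) : ℕ) : ℝ) ^ 2) ≤ t j - t (j - 1) ∧
        t j - t (j - 1) ≤ C * (t k - t 0) / ((min j (k + 1 - j) : ℕ) : ℝ) ^ 2) →
      ∀ h : ℝ → ℝ, Monotone h → (∀ j : ℕ, j ≤ k → h (t j) = j) →
      ∃ x δ : ℝ, 0 < δ ∧ t 0 ≤ x - δ ∧ x + δ ≤ t k ∧
        (k : ℝ) / C' * (h x - h (x - δ)) ≤ h (x + δ) - h x ∧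
        (k : ℝ) / C' ≤ h (x + δ) - h x := by
  have hC0 : 0 < C := lt_of_lt_of_le one_pos hC
  set m : ℕ := ⌈C ^ 2⌉₊ with hmdef
  have hC2 : C ^ 2 ≤ (m : ℝ) := Nat.le_ceil _
  have hm1 : 1 ≤ m := by
    have h2 : (0 : ℝ) < C ^ 2 := by positivity
    exact Nat.one_le_iff_ne_zero.mpr (by
      intro h0
      rw [h0] at hC2
      simp at hC2
      nlinarith)
  refine ⟨((4 * m : ℕ) : ℝ), by exact_mod_cast Nat.one_le_iff_ne_zero.mpr (by omega), ?_⟩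
  intro k hk t ht hgap h hmono hval
  have hkm : 4 * m ≤ k := by exact_mod_cast hk
  have hk1 : 1 ≤ k := by omega
  have tmono : ∀ i j : ℕ, i ≤ j → j ≤ k → t i ≤ t j := by
    intro i j hij hjk
    rcases eq_or_lt_of_le hij with rfl | hlt
    · exact le_rfl
    · exact (ht i j hlt hjk).le
  set L : ℝ := t k - t 0 with hLdef
  have hL : 0 < L := sub_pos.mpr (ht 0 k (by omega) le_rfl)
  have hgap1 : L / C ≤ t 1 - t 0 := by
    have h1 := (hgap 1 le_rfl hk1).1
    have hmin : min 1 (k + 1 - 1) = 1 := by omega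
    rw [hmin] at h1
    simpa using h1
  have hgapk : L / C ≤ t k - t (k - 1) := by
    have h1 := (hgap k hk1 le_rfl).1
    have hmin : min k (k + 1 - k) = 1 := by omega
    rw [hmin] at h1
    simpa using h1
  set j' : ℕ := (k + 1) / 2 with hj'def
  have hmj' : m ≤ j' := by omega
  have hj'k : j' ≤ k := by omega
  have key : ∀ j : ℕ, m ≤ j → 2 * j ≤ k + 1 →
      t j ≤ t m + C * L / m - C * L / j := by
    intro j hj
    induction j, hj using Nat.le_induction with
    | base => intro _; simp
    | succ j hj ih =>
      intro h2j
      have ihj := ih (by omega)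
      have hjk : j + 1 ≤ k := by omega
      have hmin : min (j + 1) (k + 1 - (j + 1)) = j + 1 := by omega
      have hgapj := (hgap (j + 1) (by omega) hjk).2
      rw [hmin] at hgapj
      have hstep : t (j + 1) - t j ≤ C * L / ((j : ℝ) + 1) ^ 2 := by
        simpa [Nat.add_sub_cancel] using hgapj
      have hjpos : (0 : ℝ) < j := by
        have : 1 ≤ j := le_trans hm1 hj
        exact_mod_cast this
      have hfrac1 : C * L / ((j : ℝ) + 1) ^ 2 ≤ C * L / ((j : ℝ) * ((j : ℝ) + 1)) :=
        div_le_div_of_nonneg_left (by positivity) (by positivity) (by nlinarith)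
      have hfrac2 : C * L / ((j : ℝ) * ((j : ℝ) + 1)) = C * L / j - C * L / ((j : ℝ) + 1) := by
        field_simp
        ring
      push_cast
      push_cast at ihj hstep
      linarith [hfrac2 ▸ hfrac1]
  have hj'pos : (0 : ℝ) < j' := by exact_mod_cast (by omega : 0 < j')
  have hj'bound : t j' ≤ t m + C * L / m := by
    have hkey := key j' hmj' (by omega)
    have hpos : 0 ≤ C * L / (j' : ℝ) := by positivity
    linarith
  have hmpos : (0 : ℝ) < m := by exact_mod_cast hm1
  have hCLm : C * L / (m : ℝ) ≤ L / C := by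
    rw [div_le_div_iff₀ hmpos hC0]
    nlinarith
  -- h-value facts
  have hxval : h (t m) = m := hval m (by omega)
  have h0val : h (t 0) = 0 := by simpa using hval 0 (by omega)
  have h1m : t 1 ≤ t m := tmono 1 m hm1 (by omega)
  have hxδ0 : t 0 ≤ t m - L / C := by linarith
  have hleft : h (t m) - h (t m - L / C) ≤ m := by
    have := hmono hxδ0
    rw [h0val] at this
    linarith [hxval.le]
  have hδpos : (0 : ℝ) < L / C := by positivity
  have hleft0 : 0 ≤ h (t m) - h (t m - L / C) :=
    sub_nonneg.mpr (hmono (by linarith))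
  have hright : (j' : ℝ) - m ≤ h (t m + L / C) - h (t m) := by
    have hjx : t j' ≤ t m + L / C := le_trans hj'bound (by linarith)
    have hmo := hmono hjx
    rw [hval j' hj'k] at hmo
    rw [hxval]
    linarith
  have hj'half : (k : ℝ) / 2 ≤ (j' : ℝ) := by
    have h2 : k ≤ 2 * j' := by omega
    have h3 := (Nat.cast_le (α := ℝ)).mpr h2
    push_cast at h3
    linarith
  have hm4 : (m : ℝ) ≤ (k : ℝ) / 4 := by
    have h3 := (Nat.cast_le (α := ℝ)).mpr hkm
    push_cast at h3
    linarith
  have hquarter : (k : ℝ) / 4 ≤ h (t m + L / C) - h (t m) := by linarith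
  have hkfrac : (k : ℝ) / ((4 * m : ℕ) : ℝ) * (m : ℝ) = (k : ℝ) / 4 := by
    push_cast
    field_simp
  have hk0 : (0 : ℝ) ≤ k := Nat.cast_nonneg k
  refine ⟨t m, L / C, hδpos, hxδ0, ?_, ?_, ?_⟩
  · have hmk1 : t m ≤ t (k - 1) := tmono m (k - 1) (by omega) (by omega)
    linarith
  · have hmul : (k : ℝ) / ((4 * m : ℕ) : ℝ) * (h (t m) - h (t m - L / C)) ≤
        (k : ℝ) / ((4 * m : ℕ) : ℝ) * (m : ℝ) := by
      apply mul_le_mul_of_nonneg_left hleft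
      positivity
    rw [hkfrac] at hmul
    linarith
  · have h44 : (4 : ℝ) ≤ ((4 * m : ℕ) : ℝ) := by exact_mod_cast (by omega : 4 ≤ 4 * m)
    have hle : (k : ℝ) / ((4 * m : ℕ) : ℝ) ≤ (k : ℝ) / 4 :=
      div_le_div_of_nonneg_left hk0 (by norm_num) h44
    linarith
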